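/- Let a₃ > 0, a₁' < 0 and A > 0 be real numbers. For ρ > 0 define f_ρ(r) = a₃·r³ + ρ·a₁'·r − A, and set ρ* = (3/|a₁'|)·(a₃·A²/4)^{1/3}. Then the equation f_ρ(r) = 0 has exactly one real root when 0 < ρ < ρ*, exactly two distinct real roots when ρ = ρ*, and exactly three distinct real roots when ρ > ρ*. -/

import Mathlib

-- difference of two roots
lemma root_sum (s q a b : ℝ) (ha : a^3 - 3*s^2*a + q = 0) (hb : b^3 - 3*s^2*b + q = 0)
    (hab : a ≠ b) : a^2 + a*b + b^2 = 3*s^2 := by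
  have h : (a - b) * (a^2 + a*b + b^2 - 3*s^2) = 0 := by linear_combination ha - hb
  rcases mul_eq_zero.1 h with h' | h'
  · exact absurd (sub_eq_zero.1 h') hab
  · linarith [sub_eq_zero.1 h'] 

lemma exists_root_Icc (s q a b : ℝ) (hab : a ≤ b) (h1 : a^3-3*s^2*a+q ≤ 0)
    (h2 : 0 ≤ b^3-3*s^2*b+q) : ∃ r, r ∈ Set.Icc a b ∧ r^3-3*s^2*r+q = 0 := by
  have hc : ContinuousOn (fun r : ℝ => r^3-3*s^2*r+q) (Set.Icc a b) := by fun_prop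
  have := intermediate_value_Icc hab hc (Set.mem_Icc.2 ⟨h1, h2⟩)
  obtain ⟨r, hr, hr0⟩ := this
  exact ⟨r, hr, hr0⟩

lemma exists_root_Icc' (s q a b : ℝ) (hab : a ≤ b) (h1 : 0 ≤ a^3-3*s^2*a+q)
    (h2 : b^3-3*s^2*b+q ≤ 0) : ∃ r, r ∈ Set.Icc a b ∧ r^3-3*s^2*r+q = 0 := by
  have hc : ContinuousOn (fun r : ℝ => r^3-3*s^2*r+q) (Set.Icc a b) := by fun_prop
  have := intermediate_value_Icc' hab hc (Set.mem_Icc.2 ⟨h2, h1⟩)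
  obtain ⟨r, hr, hr0⟩ := this
  exact ⟨r, hr, hr0⟩

lemma one_root (s q : ℝ) (hs : 0 < s) (h : 2*s^3 + q < 0) :
    {r : ℝ | r^3 - 3*s^2*r + q = 0}.ncard = 1 := by
  have hq : q < 0 := by nlinarith [pow_pos hs 3]
  set M : ℝ := 2*s + 1 - q with hM
  have hgM : 0 ≤ M^3 - 3*s^2*M + q := by
    have key : M^3 - 3*s^2*M + q = (1-q)*(M+s)^2 + 2*s^3 + q := by rw [hM]; ring
    have h2 : 1 ≤ (M+s)^2 := by nlinarith
    have h3 : (1-q)*1 ≤ (1-q)*(M+s)^2 := mul_le_mul_of_nonneg_left h2 (by linarith)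
    nlinarith [pow_pos hs 3]
  obtain ⟨r₀, hr₀I, hr₀⟩ := exists_root_Icc s q (2*s) M (by nlinarith) (by nlinarith) hgM
  -- every root is > 2s
  have hgt : ∀ r, r^3 - 3*s^2*r + q = 0 → 2*s < r := by
    intro r hr
    by_contra hle
    push_neg at hle
    have key : (r - 2*s)*(r + s)^2 = -(2*s^3 + q) := by linear_combination hr
    nlinarith [sq_nonneg (r + s)]
  rw [Set.ncard_eq_one]
  refine ⟨r₀, ?_⟩
  ext r
  simp only [Set.mem_setOf_eq, Set.mem_singleton_iff]
  constructor
  · intro hr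
    by_contra hne
    have h1 := hgt r hr
    have h2 := hgt r₀ hr₀
    have := root_sum s q r r₀ hr hr₀ hne
    nlinarith
  · rintro rfl; exact hr₀

lemma two_roots (s : ℝ) (hs : 0 < s) :
    {r : ℝ | r^3 - 3*s^2*r + (-(2*s^3)) = 0}.ncard = 2 := by
  have hset : {r : ℝ | r^3 - 3*s^2*r + (-(2*s^3)) = 0} = {2*s, -s} := by
    ext r
    simp only [Set.mem_setOf_eq, Set.mem_insert_iff, Set.mem_singleton_iff]
    constructor
    · intro hr
      have key : (r - 2*s)*(r + s)^2 = 0 := by linear_combination hr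
      rcases mul_eq_zero.1 key with h' | h'
      · left; linarith [sub_eq_zero.1 h']
      · right; have := pow_eq_zero_iff (n := 2) (by norm_num) |>.1 h'; linarith
    · rintro (rfl | rfl) <;> ring
  rw [hset]
  rw [Set.ncard_pair (by intro h; nlinarith)]

lemma three_roots (s q : ℝ) (hs : 0 < s) (hq : q < 0) (h : 0 < 2*s^3 + q) :
    {r : ℝ | r^3 - 3*s^2*r + q = 0}.ncard = 3 := by
  obtain ⟨a, haI, ha⟩ := exists_root_Icc s q (-(2*s)) (-s) (by linarith) (by nlinarith) (by nlinarith)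
  obtain ⟨b, hbI, hb⟩ := exists_root_Icc' s q (-s) 0 (by linarith) (by nlinarith) (by nlinarith)
  set M : ℝ := 2*s + 1 - q with hM
  have hgM : 0 ≤ M^3 - 3*s^2*M + q := by
    have key : M^3 - 3*s^2*M + q = (1-q)*(M+s)^2 + 2*s^3 + q := by rw [hM]; ring
    have h2 : 1 ≤ (M+s)^2 := by nlinarith
    have h3 : (1-q)*1 ≤ (1-q)*(M+s)^2 := mul_le_mul_of_nonneg_left h2 (by linarith)
    nlinarith [pow_pos hs 3]
  obtain ⟨c, hcI, hc⟩ := exists_root_Icc s q s M (by nlinarith) (by nlinarith) hgM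
  obtain ⟨haL, haR⟩ := haI
  obtain ⟨hbL, hbR⟩ := hbI
  obtain ⟨hcL, hcR⟩ := hcI
  have hgms : (-s)^3 - 3*s^2*(-s) + q ≠ 0 := by intro h'; nlinarith
  have hans : a ≠ -s := by intro h'; rw [h'] at ha; exact hgms ha
  have hbns : b ≠ -s := by intro h'; rw [h'] at hb; exact hgms hb
  have halt : a < -s := lt_of_le_of_ne haR hans
  have hblt : -s < b := lt_of_le_of_ne hbL (Ne.symm hbns)
  have hab : a ≠ b := by intro h'; rw [h'] at halt; linarith
  have hac : a ≠ c := by intro h'; rw [h'] at halt; linarith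
  have hbc : b ≠ c := by intro h'; rw [h'] at hblt; nlinarith
  have hset : {r : ℝ | r^3 - 3*s^2*r + q = 0} = {a, b, c} := by
    ext r
    simp only [Set.mem_setOf_eq, Set.mem_insert_iff, Set.mem_singleton_iff]
    constructor
    · intro hr
      by_contra hne
      push_neg at hne
      obtain ⟨hra, hrb, hrc⟩ := hne
      have e1 := root_sum s q a b ha hb hab
      have e2 := root_sum s q a c ha hc hac
      have e3 := root_sum s q a r ha hr (Ne.symm hra)
      -- from e1, e2 : (b - c)(a+b+c) = 0, b ≠ c so a+b+c = 0
      have habc : a + b + c = 0 := by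
        have : (b - c) * (a + b + c) = 0 := by linear_combination e1 - e2
        rcases mul_eq_zero.1 this with h' | h'
        · exact absurd (sub_eq_zero.1 h') hbc
        · exact h'
      have habr : a + b + r = 0 := by
        have : (b - r) * (a + b + r) = 0 := by linear_combination e1 - e3
        rcases mul_eq_zero.1 this with h' | h'
        · exact absurd (sub_eq_zero.1 h').symm hrb
        · exact h'
      exact hrc (by linarith)
    · rintro (rfl | rfl | rfl) <;> assumption
  rw [hset]
  rw [Set.ncard_eq_three]
  exact ⟨a, b, c, hab, hac, hbc, rfl⟩

/-- For the cubic `f_ρ(r) = a₃r³ + ρa₁'r − A` with `a₃ > 0`, `a₁' < 0`, `A > 0`, and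
`ρ* = (3/|a₁'|)(a₃A²/4)^{1/3}`, the equation `f_ρ(r) = 0` has exactly one real root for
`0 < ρ < ρ*`, exactly two for `ρ = ρ*`, and exactly three for `ρ > ρ*`. -/
theorem stmt_0 (a₃ a₁' A : ℝ) (ha₃ : 0 < a₃) (ha₁' : a₁' < 0) (hA : 0 < A)
    (f : ℝ → ℝ → ℝ) (hf : ∀ ρ r, f ρ r = a₃ * r ^ 3 + ρ * a₁' * r - A)
    (ρstar : ℝ) (hρstar : ρstar = (3 / |a₁'|) * (a₃ * A ^ 2 / 4) ^ ((1 : ℝ) / 3)) :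
    ∀ ρ : ℝ, 0 < ρ →
      ((ρ < ρstar → {r : ℝ | f ρ r = 0}.ncard = 1) ∧
       (ρ = ρstar → {r : ℝ | f ρ r = 0}.ncard = 2) ∧
       (ρstar < ρ → {r : ℝ | f ρ r = 0}.ncard = 3)) := by
  have hA1 : 0 < -a₁' := by linarith
  have habs : |a₁'| = -a₁' := abs_of_neg ha₁'
  have hx : (0:ℝ) < a₃ * A^2 / 4 := by positivity
  have hρs_pos : 0 < ρstar := by
    rw [hρstar, habs]
    positivity
  have hcube : ρstar ^ 3 * (4 * (-a₁')^3) = 27 * a₃ * A^2 := by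
    rw [hρstar, habs, mul_pow, div_pow]
    have h3 : ((a₃ * A^2 / 4) ^ ((1:ℝ)/3)) ^ (3:ℕ) = a₃ * A^2 / 4 := by
      rw [← Real.rpow_natCast ((a₃ * A^2 / 4) ^ ((1:ℝ)/3)) 3, ← Real.rpow_mul hx.le]
      norm_num
    rw [h3]
    have := ha₁'.ne
    field_simp
    ring
  intro ρ hρ
  obtain ⟨s, hs, hs2⟩ : ∃ s : ℝ, 0 < s ∧ s^2 = ρ * (-a₁') / (3 * a₃) :=
    ⟨Real.sqrt (ρ * (-a₁') / (3 * a₃)),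
      Real.sqrt_pos.2 (by positivity),
      Real.sq_sqrt (by positivity)⟩
  have hyp : 0 < A / a₃ := div_pos hA ha₃
  have hq : -(A / a₃) < 0 := by linarith
  have hfr : ∀ r, f ρ r = a₃ * (r^3 - 3*s^2*r + (-(A / a₃))) := by
    intro r
    rw [hf, hs2]
    field_simp
    ring
  have hset : {r : ℝ | f ρ r = 0} = {r : ℝ | r^3 - 3*s^2*r + (-(A / a₃)) = 0} := by
    ext r
    simp only [Set.mem_setOf_eq, hfr, mul_eq_zero]
    constructor
    · rintro (h | h)
      · exact absurd h ha₃.ne'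
      · exact h
    · exact Or.inr
  have hs6 : (2*s^3)^2 * (27 * a₃^3) = 4*ρ^3*(-a₁')^3 := by
    have h0 : ((s^2)^3) * (27 * a₃^3) = ρ^3*(-a₁')^3 := by
      rw [hs2]; field_simp; ring
    linear_combination 4 * h0
  have hpos4 : 0 < 4*(-a₁')^3 := by positivity
  have hpos27 : 0 < 27 * a₃^3 := by positivity
  have hlt : ρ < ρstar → 2*s^3 + (-(A / a₃)) < 0 := by
    intro h
    have h3 : ρ^3 < ρstar^3 := pow_lt_pow_left₀ h hρ.le (by norm_num)
    have h5 : 4*ρ^3*(-a₁')^3 < 27*a₃*A^2 := by nlinarith [mul_lt_mul_of_pos_right h3 hpos4]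
    have hy2 : (A/a₃)^2 * (27 * a₃^3) = 27*a₃*A^2 := by field_simp
    have hx2 : (2*s^3)^2 < (A/a₃)^2 :=
      (mul_lt_mul_iff_of_pos_right hpos27).1 (by rw [hs6, hy2]; exact h5)
    have hfin : 2*s^3 < A/a₃ := by
      by_contra hcon
      push_neg at hcon
      exact absurd hx2 (not_lt.2 (pow_le_pow_left₀ hyp.le hcon 2))
    linarith
  have heq : ρ = ρstar → (-(A / a₃)) = -(2*s^3) := by
    intro h
    have h5 : 4*ρ^3*(-a₁')^3 = 27*a₃*A^2 := by rw [h]; linarith [hcube]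
    have hy2 : (A/a₃)^2 * (27 * a₃^3) = 27*a₃*A^2 := by field_simp
    have hsq : (2*s^3)^2 = (A/a₃)^2 := by
      have e1 : (2*s^3)^2 * (27 * a₃^3) = (A/a₃)^2 * (27 * a₃^3) := by
        rw [hs6, hy2]; exact h5
      exact mul_right_cancel₀ hpos27.ne' e1
    have hx2 : (2*s^3 - A/a₃) * (2*s^3 + A/a₃) = 0 := by linear_combination hsq
    have h2 : 2*s^3 = A/a₃ := by
      rcases mul_eq_zero.1 hx2 with h' | h'
      · linarith
      · linarith [pow_pos hs 3]
    rw [h2]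
  have hgt : ρstar < ρ → 0 < 2*s^3 + (-(A / a₃)) := by
    intro h
    have h3 : ρstar^3 < ρ^3 := pow_lt_pow_left₀ h hρs_pos.le (by norm_num)
    have h5 : 27*a₃*A^2 < 4*ρ^3*(-a₁')^3 := by nlinarith [mul_lt_mul_of_pos_right h3 hpos4]
    have hy2 : (A/a₃)^2 * (27 * a₃^3) = 27*a₃*A^2 := by field_simp
    have hx2 : (A/a₃)^2 < (2*s^3)^2 :=
      (mul_lt_mul_iff_of_pos_right hpos27).1 (by rw [hs6, hy2]; exact h5)
    have hfin : A/a₃ < 2*s^3 := by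
      by_contra hcon
      push_neg at hcon
      exact absurd hx2 (not_lt.2 (pow_le_pow_left₀ (by positivity) hcon 2))
    linarith
  refine ⟨?_, ?_, ?_⟩
  · intro h
    rw [hset]
    exact one_root s (-(A / a₃)) hs (hlt h)
  · intro h
    rw [hset, heq h]
    exact two_roots s hs
  · intro h
    rw [hset]
    exact three_roots s (-(A / a₃)) hs hq (hgt h)
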